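/- Let ψ : ℝ → ℝ be continuous and differentiable at the points x₁ and x₂, where x₁ < x₂, ψ(x₁) = x₁, ψ(x₂) = x₂, ψ(t) ≠ t for all t in the open interval (x₁, x₂), and assume 0 < ψ′(x₁) ≤ 1 and 0 < ψ′(x₂) ≤ 1. Then ψ′(x₁) = 1 or ψ′(x₂) = 1. -/
import Mathlib


open Filter Topology

lemma slope_neg_right {g : ℝ → ℝ} {x d : ℝ} (hg : HasDerivAt g d x) (h0 : g x = 0)
    (hd : d < 0) : ∀ᶠ t in 𝓝[>] x, g t < 0 := by
  have hs := (hasDerivAt_iff_tendsto_slope.mp hg)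
  have hs' : Tendsto (slope g x) (𝓝[>] x) (𝓝 d) :=
    hs.mono_left (nhdsWithin_mono x (fun t ht => ne_of_gt ht))
  have hev : ∀ᶠ t in 𝓝[>] x, slope g x t < 0 :=
    hs' (Iio_mem_nhds hd)
  filter_upwards [hev, self_mem_nhdsWithin] with t hslope (ht : x < t)
  have := hslope
  rw [slope_def_field] at this
  have hne : t - x > 0 := sub_pos.mpr ht
  simp only [h0, sub_zero] at this
  -- this : g t / (t - x) < 0  (div_slope orientation may differ)
  have : g t / (t - x) < 0 := by
    have h := hslope
    rw [slope, h0, vsub_eq_sub, sub_zero] at h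
    simpa [div_eq_inv_mul] using h
  rcases div_neg_iff.mp this with ⟨_, h2⟩ | ⟨h1, _⟩
  · exact absurd h2 (not_lt.mpr hne.le)
  · exact h1

lemma slope_pos_left {g : ℝ → ℝ} {x d : ℝ} (hg : HasDerivAt g d x) (h0 : g x = 0)
    (hd : d < 0) : ∀ᶠ t in 𝓝[<] x, 0 < g t := by
  have hs := (hasDerivAt_iff_tendsto_slope.mp hg)
  have hs' : Tendsto (slope g x) (𝓝[<] x) (𝓝 d) :=
    hs.mono_left (nhdsWithin_mono x (fun t ht => ne_of_lt ht))
  have hev : ∀ᶠ t in 𝓝[<] x, slope g x t < 0 :=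
    hs' (Iio_mem_nhds hd)
  filter_upwards [hev, self_mem_nhdsWithin] with t hslope (ht : t < x)
  have hne : t - x < 0 := sub_neg.mpr ht
  have h : g t / (t - x) < 0 := by
    have h := hslope
    rw [slope, h0, vsub_eq_sub, sub_zero] at h
    simpa [div_eq_inv_mul] using h
  rcases div_neg_iff.mp h with ⟨h1, _⟩ | ⟨_, h2⟩
  · exact h1
  · exact absurd h2 (not_lt.mpr hne.le)

/-- If `ψ` is continuous with fixed points `x₁ < x₂`, no fixed point strictly in between,
and `0 < ψ′(x₁) ≤ 1`, `0 < ψ′(x₂) ≤ 1`, then `ψ′(x₁) = 1` or `ψ′(x₂) = 1`. -/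
theorem stmt10 (ψ : ℝ → ℝ) (x₁ x₂ : ℝ)
    (hcont : Continuous ψ)
    (hdiff₁ : DifferentiableAt ℝ ψ x₁) (hdiff₂ : DifferentiableAt ℝ ψ x₂)
    (hlt : x₁ < x₂)
    (hfix₁ : ψ x₁ = x₁) (hfix₂ : ψ x₂ = x₂)
    (hnofix : ∀ t ∈ Set.Ioo x₁ x₂, ψ t ≠ t)
    (hd₁ : 0 < deriv ψ x₁ ∧ deriv ψ x₁ ≤ 1)
    (hd₂ : 0 < deriv ψ x₂ ∧ deriv ψ x₂ ≤ 1) :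
    deriv ψ x₁ = 1 ∨ deriv ψ x₂ = 1 := by
  by_contra hc
  push_neg at hc
  obtain ⟨h1, h2⟩ := hc
  have hlt1 : deriv ψ x₁ < 1 := lt_of_le_of_ne hd₁.2 h1
  have hlt2 : deriv ψ x₂ < 1 := lt_of_le_of_ne hd₂.2 h2
  set g : ℝ → ℝ := fun t => ψ t - t with hg
  have hg1 : HasDerivAt g (deriv ψ x₁ - 1) x₁ :=
    (hdiff₁.hasDerivAt.sub (hasDerivAt_id x₁))
  have hg2 : HasDerivAt g (deriv ψ x₂ - 1) x₂ :=
    (hdiff₂.hasDerivAt.sub (hasDerivAt_id x₂))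
  have hg0₁ : g x₁ = 0 := by simp [hg, hfix₁]
  have hg0₂ : g x₂ = 0 := by simp [hg, hfix₂]
  have hneg := slope_neg_right hg1 hg0₁ (by linarith)
  have hpos := slope_pos_left hg2 hg0₂ (by linarith)
  have hmem1 : Set.Ioo x₁ x₂ ∈ 𝓝[>] x₁ := Ioo_mem_nhdsGT_of_mem ⟨le_refl _, hlt⟩
  have hmem2 : Set.Ioo x₁ x₂ ∈ 𝓝[<] x₂ := Ioo_mem_nhdsLT_of_mem ⟨hlt, le_refl _⟩
  obtain ⟨t₁, ht₁neg, ht₁mem⟩ := (hneg.and (eventually_mem_set.mpr hmem1)).exists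
  obtain ⟨t₂, ht₂pos, ht₂mem⟩ := (hpos.and (eventually_mem_set.mpr hmem2)).exists
  have hcg : Continuous g := hcont.sub continuous_id
  rcases lt_trichotomy t₁ t₂ with h | h | h
  · obtain ⟨c, hc, hgc⟩ := intermediate_value_Ioo h.le hcg.continuousOn
      (show (0:ℝ) ∈ Set.Ioo (g t₁) (g t₂) from ⟨ht₁neg, ht₂pos⟩)
    exact hnofix c ⟨lt_trans ht₁mem.1 hc.1, lt_trans hc.2 ht₂mem.2⟩ (by
      have : ψ c - c = 0 := hgc
      linarith)
  · exact absurd (h ▸ ht₁neg) (not_lt.mpr ht₂pos.le)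
  · obtain ⟨c, hc, hgc⟩ := intermediate_value_Ioo' h.le hcg.continuousOn
      (show (0:ℝ) ∈ Set.Ioo (g t₁) (g t₂) from ⟨ht₁neg, ht₂pos⟩)
    exact hnofix c ⟨lt_trans ht₂mem.1 hc.1, lt_trans hc.2 ht₁mem.2⟩ (by
      have : ψ c - c = 0 := hgc
      linarith)
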